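/- Let λ : ℝ² → ℝ be nonnegative and continuous with λ > 0 everywhere. Then the only pairs of continuous collision invariants (ψ₁, ψ₂) of the heterogeneous collision operator (i.e., pairs for which ∫∫ ψ₁(m,c)(Q_gain[f⁻] − Q_loss[f⁺]) + ψ₂(m,c)(Q_gain[f⁺] − Q_loss[f⁻]) dm dc = 0 for all nonnegative integrable f⁺, f⁻) are pairs of constant functions ψ₁ ≡ c₁, ψ₂ ≡ c₂ with c₁ = ψ₂(S,0) and c₂ = ψ₁(S,0). -/

import Mathlib

open MeasureTheory

/-- If a continuous function has positive value at a point, its integral over some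
sufficiently small closed ball around that point is positive. -/
lemma aux_pos_ball (g : ℝ × ℝ → ℝ) (hg : Continuous g) (x₀ : ℝ × ℝ) (hpos : 0 < g x₀) :
    ∃ r : ℝ, 0 < r ∧ 0 < ∫ x in Metric.closedBall x₀ r, g x := by
  have hcont : ContinuousAt g x₀ := hg.continuousAt
  obtain ⟨r, hr, hball⟩ := Metric.continuousAt_iff.mp hcont (g x₀ / 2) (by linarith)
  refine ⟨r / 2, by linarith, ?_⟩
  set s := Metric.closedBall x₀ (r / 2) with hs
  have hms : MeasurableSet s := measurableSet_closedBall
  have hvol : 0 < MeasureTheory.volume s :=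
    Metric.measure_closedBall_pos _ _ (by linarith)
  have hvolne : MeasureTheory.volume s ≠ ⊤ := measure_closedBall_lt_top.ne
  have hvolpos : 0 < (MeasureTheory.volume s).toReal :=
    ENNReal.toReal_pos hvol.ne' hvolne
  have hint : IntegrableOn g s :=
    hg.continuousOn.integrableOn_compact (isCompact_closedBall _ _)
  have hle : ∀ x ∈ s, g x₀ / 2 ≤ g x := by
    intro x hx
    have hd : dist x x₀ < r := by
      have := Metric.mem_closedBall.mp hx; linarith
    have := abs_lt.mp (by simpa [Real.dist_eq] using hball hd)
    linarith [this.1]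
  have := MeasureTheory.setIntegral_ge_of_const_le hms hvolne hle hint
  have : 0 < g x₀ / 2 * (MeasureTheory.volume s).toReal := by positivity
  linarith [MeasureTheory.setIntegral_ge_of_const_le hms hvolne hle hint,
    show MeasureTheory.volume.real s • (g x₀ / 2) = g x₀ / 2 * (MeasureTheory.volume s).toReal by
      rw [smul_eq_mul, measureReal_def, mul_comm]]

/-- If a continuous function has zero integral over every closed ball, it vanishes. -/
lemma aux_vanish (g : ℝ × ℝ → ℝ) (hg : Continuous g)
    (h : ∀ (x₀ : ℝ × ℝ) (r : ℝ), 0 < r → ∫ x in Metric.closedBall x₀ r, g x = 0) :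
    ∀ x, g x = 0 := by
  intro x₀
  by_contra hne
  rcases lt_or_gt_of_ne hne with hneg | hpos
  · obtain ⟨r, hr, hint⟩ := aux_pos_ball (fun x => -g x) (hg.neg) x₀ (by simpa using neg_pos.mpr hneg)
    rw [MeasureTheory.integral_neg, h x₀ r hr] at hint
    simp at hint
  · obtain ⟨r, hr, hint⟩ := aux_pos_ball g hg x₀ hpos
    rw [h x₀ r hr] at hint
    exact lt_irrefl _ hint

/-- Key step: from the invariance identity, a continuous function whose weighted integrals
agree with a constant on all indicator test functions equals that constant. -/
lemma aux_const (ψ lam : ℝ × ℝ → ℝ) (hψ : Continuous ψ) (hlam : Continuous lam)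
    (hlampos : ∀ x, 0 < lam x) (c : ℝ)
    (h : ∀ fp : ℝ × ℝ → ℝ, (∀ x, 0 ≤ fp x) → Integrable fp →
      c * ∫ x, lam x * fp x = ∫ x, ψ x * lam x * fp x) :
    ∀ x, ψ x = c := by
  have hvan : ∀ x, (ψ x - c) * lam x = 0 := by
    apply aux_vanish _ ((hψ.sub continuous_const).mul hlam)
    intro x₀ r hr
    set s := Metric.closedBall x₀ r with hs
    have hms : MeasurableSet s := measurableSet_closedBall
    have hcs : IsCompact s := isCompact_closedBall _ _
    have hvolne : MeasureTheory.volume s ≠ ⊤ := measure_closedBall_lt_top.ne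
    -- test function: indicator of s
    set fp : ℝ × ℝ → ℝ := s.indicator 1 with hfp
    have hfpnn : ∀ x, 0 ≤ fp x := fun x => Set.indicator_nonneg (fun _ _ => zero_le_one) x
    have hfpint : Integrable fp := by
      rw [hfp, integrable_indicator_iff hms]
      exact integrableOn_const hvolne
    have key := h fp hfpnn hfpint
    have e1 : ∫ x, lam x * fp x = ∫ x in s, lam x := by
      rw [hfp]
      have : (fun x => lam x * s.indicator 1 x) = s.indicator lam := by
        funext x
        by_cases hx : x ∈ s <;> simp [hx]
      rw [this, MeasureTheory.integral_indicator hms]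
    have e2 : ∫ x, ψ x * lam x * fp x = ∫ x in s, ψ x * lam x := by
      rw [hfp]
      have : (fun x => ψ x * lam x * s.indicator 1 x) = s.indicator (fun x => ψ x * lam x) := by
        funext x
        by_cases hx : x ∈ s <;> simp [hx]
      rw [this, MeasureTheory.integral_indicator hms]
    rw [e1, e2] at key
    have hintlam : IntegrableOn lam s := hlam.continuousOn.integrableOn_compact hcs
    have hintpl : IntegrableOn (fun x => ψ x * lam x) s :=
      (hψ.mul hlam).continuousOn.integrableOn_compact hcs
    have : ∫ x in s, (ψ x - c) * lam x = (∫ x in s, ψ x * lam x) - c * ∫ x in s, lam x := by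
      have : (fun x => (ψ x - c) * lam x) = fun x => ψ x * lam x - c * lam x := by
        funext x; ring
      rw [this]
      have hcl : IntegrableOn (fun x => c * lam x) s := by
        exact hintlam.const_mul c
      rw [MeasureTheory.integral_sub hintpl hcl, MeasureTheory.integral_const_mul]
    show ∫ x in s, (ψ x - c) * lam x = 0
    rw [this, ← key]
    ring
  intro x
  have := hvan x
  have hl := (hlampos x).ne'
  have := mul_eq_zero.mp this
  rcases this with h1 | h2
  · linarith [sub_eq_zero.mp h1]
  · exact absurd h2 hl

/-- If λ > 0 everywhere is continuous, then the only continuous collision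
invariants (ψ₁, ψ₂) of the heterogeneous collision operator (i.e. pairs with
∫∫ ψ₁ (Q_gain[f⁻] − Q_loss[f⁺]) + ψ₂ (Q_gain[f⁺] − Q_loss[f⁻]) = 0 for all nonnegative
integrable f⁺, f⁻, where ∫∫ ψ Q_gain[f] = ψ(S,0) ∫∫ fλ and Q_loss[f] = fλ) are constants
ψ₁ ≡ c₁, ψ₂ ≡ c₂ with c₁ = ψ₂(S,0) and c₂ = ψ₁(S,0). -/
theorem collision_invariants_constant (ψ₁ ψ₂ lam : ℝ × ℝ → ℝ)
    (hψ₁ : Continuous ψ₁) (hψ₂ : Continuous ψ₂)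
    (hlam : Continuous lam) (hlampos : ∀ x, 0 < lam x)
    (S : ℝ) (hS : 0 < S)
    (hinv : ∀ fp fm : ℝ × ℝ → ℝ, (∀ x, 0 ≤ fp x) → (∀ x, 0 ≤ fm x) →
      Integrable fp → Integrable fm →
      (ψ₁ (S, 0) * ∫ x, lam x * fm x) - (∫ x, ψ₁ x * lam x * fp x) +
      (ψ₂ (S, 0) * ∫ x, lam x * fp x) - (∫ x, ψ₂ x * lam x * fm x) = 0) :
    ∃ c₁ c₂ : ℝ, (∀ x, ψ₁ x = c₁) ∧ (∀ x, ψ₂ x = c₂) ∧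
      c₁ = ψ₂ (S, 0) ∧ c₂ = ψ₁ (S, 0) := by
  have h1 : ∀ x, ψ₁ x = ψ₂ (S, 0) := by
    apply aux_const ψ₁ lam hψ₁ hlam hlampos
    intro fp hfpnn hfpint
    have := hinv fp 0 hfpnn (fun _ => le_refl 0) hfpint (integrable_zero _ _ _)
    simp only [Pi.zero_apply, mul_zero, MeasureTheory.integral_zero] at this
    linarith
  have h2 : ∀ x, ψ₂ x = ψ₁ (S, 0) := by
    apply aux_const ψ₂ lam hψ₂ hlam hlampos
    intro fm hfmnn hfmint
    have := hinv 0 fm (fun _ => le_refl 0) hfmnn (integrable_zero _ _ _) hfmint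
    simp only [Pi.zero_apply, mul_zero, MeasureTheory.integral_zero] at this
    linarith
  exact ⟨ψ₂ (S, 0), ψ₁ (S, 0), h1, h2, rfl, rfl⟩
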